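/- Postselected TOBL correlations are local: if P(a_1,a_2,a_3|x_1,x_2,x_3) admits a TOBL decomposition for the bipartition 1|23, then for any fixed input x̃_3 and outcome ã_3 of party 3 with P(ã_3|x̃_3) > 0, the conditional distribution P(a_1,a_2|x_1,x_2, x̃_3, ã_3) admits a local hidden-variable decomposition Σ_λ P'_λ P(a_1|x_1,λ) P'(a_2|x_2,λ). -/

import Mathlib

/-- Postselected TOBL correlations are local.  Suppose the tripartite box
`P(a₁,a₂,a₃|x₁,x₂,x₃)` admits a TOBL decomposition for the bipartition `1|23`
in the time order `2 ← 3`: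
`P = ∑_λ p λ · P₁(a₁|x₁,λ) · P₂₃(a₂,a₃|x₂,x₃,λ)`,
where the marginal of `P₂₃` on `a₃` is independent of `x₂` (signaling allowed
only from `3` to `2`).  Then, for any fixed input `x̃₃` and outcome `ã₃` of
party `3` occurring with positive probability, the conditional distribution
`P(a₁,a₂|x₁,x₂,x̃₃,ã₃)` admits a local hidden-variable decomposition. -/
theorem tobl_postselection_local (L : ℕ)
    (P : Bool → Bool → Bool → Bool → Bool → Bool → ℝ)
    (p : Fin L → ℝ) (hp : ∀ l, 0 ≤ p l) (hp1 : ∑ l, p l = 1)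
    (P₁ : Fin L → Bool → Bool → ℝ)  -- `P₁ l x₁ a₁`
    (hP₁pos : ∀ l x₁ a₁, 0 ≤ P₁ l x₁ a₁)
    (hP₁norm : ∀ l x₁, ∑ a₁ : Bool, P₁ l x₁ a₁ = 1)
    (P₂₃ : Fin L → Bool → Bool → Bool → Bool → ℝ)  -- `P₂₃ l x₂ x₃ a₂ a₃`
    (hP₂₃pos : ∀ l x₂ x₃ a₂ a₃, 0 ≤ P₂₃ l x₂ x₃ a₂ a₃)
    (hP₂₃norm : ∀ l x₂ x₃, ∑ a₂ : Bool, ∑ a₃ : Bool, P₂₃ l x₂ x₃ a₂ a₃ = 1)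
    (hdir : ∀ l x₂ x₂' x₃ a₃,
      ∑ a₂ : Bool, P₂₃ l x₂ x₃ a₂ a₃ = ∑ a₂ : Bool, P₂₃ l x₂' x₃ a₂ a₃)
    (hdecomp : ∀ x₁ x₂ x₃ a₁ a₂ a₃,
      P x₁ x₂ x₃ a₁ a₂ a₃ = ∑ l, p l * P₁ l x₁ a₁ * P₂₃ l x₂ x₃ a₂ a₃)
    (x₃' a₃' : Bool)
    (hmarg : 0 < ∑ l, p l * ∑ a₂ : Bool, P₂₃ l false x₃' a₂ a₃') :
    ∃ (p' : Fin L → ℝ) (Q₂ : Fin L → Bool → Bool → ℝ),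
      (∀ l, 0 ≤ p' l) ∧ ∑ l, p' l = 1 ∧
      (∀ l x₂ a₂, 0 ≤ Q₂ l x₂ a₂) ∧ (∀ l x₂, ∑ a₂ : Bool, Q₂ l x₂ a₂ = 1) ∧
      ∀ x₁ x₂ a₁ a₂,
        P x₁ x₂ x₃' a₁ a₂ a₃' / (∑ l, p l * ∑ b : Bool, P₂₃ l false x₃' b a₃') =
          ∑ l, p' l * P₁ l x₁ a₁ * Q₂ l x₂ a₂ := by
  set m : Fin L → ℝ := fun l => ∑ b : Bool, P₂₃ l false x₃' b a₃' with hm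
  set N : ℝ := ∑ l, p l * m l with hN
  have hmnn : ∀ l, 0 ≤ m l := fun l => Finset.sum_nonneg fun b _ => hP₂₃pos _ _ _ _ _
  have hNpos : 0 < N := hmarg
  have hmx : ∀ l x₂, ∑ a₂ : Bool, P₂₃ l x₂ x₃' a₂ a₃' = m l := fun l x₂ => hdir l x₂ false x₃' a₃'
  refine ⟨fun l => p l * m l / N,
    fun l x₂ a₂ => if m l = 0 then (if a₂ = false then 1 else 0)
      else P₂₃ l x₂ x₃' a₂ a₃' / m l, ?_, ?_, ?_, ?_, ?_⟩
  · intro l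
    exact div_nonneg (mul_nonneg (hp l) (hmnn l)) hNpos.le
  · rw [← Finset.sum_div, div_self hNpos.ne']
  · intro l x₂ a₂
    by_cases h : m l = 0 <;> simp [h]
    · positivity
    · exact div_nonneg (hP₂₃pos _ _ _ _ _) (hmnn l)
  · intro l x₂
    by_cases h : m l = 0
    · simp [h]
    · simp only [h, if_false]
      rw [← Finset.sum_div, hmx l x₂, div_self h]
  · intro x₁ x₂ a₁ a₂
    rw [hdecomp, Finset.sum_div]
    refine Finset.sum_congr rfl fun l _ => ?_
    by_cases h : m l = 0
    · have h0 : P₂₃ l x₂ x₃' a₂ a₃' = 0 := by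
        have := hmx l x₂
        rw [h] at this
        have := (Finset.sum_eq_zero_iff_of_nonneg
          (fun b _ => hP₂₃pos l x₂ x₃' b a₃')).mp this
        exact this a₂ (Finset.mem_univ _)
      simp [h, h0]
    · simp only [h, if_false]
      field_simp
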